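/- Let Δ be Z-graded with compatible positive system, let I be a lower ideal of Δ(1), and let I^c = Δ(1) \ I (an upper ideal of Δ(1)). Then Δ(≥1) \ ⟨I^c⟩ is a bi-convex subset of Δ⁺, where Δ(≥1) = ⊔_{j≥1} Δ(j) and ⟨I^c⟩ = ⋃_{k≥1}(I^c)^k. -/

import Mathlib

open RealInnerProductSpace

variable {V : Type*} [NormedAddCommGroup V] [InnerProductSpace ℝ V] [FiniteDimensional ℝ V]

/-- The orthogonal reflection in the hyperplane orthogonal to `α`. -/
noncomputable def sref (α : V) : V ≃ₗ[ℝ] V :=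
  (Submodule.reflection ((ℝ ∙ α)ᗮ)).toLinearEquiv

/-- `Δ` is an (irreducible, crystallographic, reduced) root system, equipped with a
`ℤ`-grading `d` (so that `Δ(i) = {γ ∈ Δ | d γ = i}`) and a compatible set `Pos = Δ⁺`
of positive roots (compatibility: every root of level `≥ 1` is positive). -/
structure GradedRootSystem (Δ : Set V) (d : V → ℤ) (Pos : Set V) : Prop where
  finite : Δ.Finite
  span_top : Submodule.span ℝ Δ = ⊤
  nonzero : ∀ α ∈ Δ, α ≠ 0
  neg_mem : ∀ α ∈ Δ, -α ∈ Δ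
  reduced : ∀ α ∈ Δ, ∀ c : ℝ, c • α ∈ Δ → c = 1 ∨ c = -1
  reflect_mem : ∀ α ∈ Δ, ∀ β ∈ Δ, β - (2 * ⟪β, α⟫ / ⟪α, α⟫) • α ∈ Δ
  crystallographic : ∀ α ∈ Δ, ∀ β ∈ Δ, ∃ n : ℤ, (n : ℝ) = 2 * ⟪β, α⟫ / ⟪α, α⟫
  irreducible : ∀ Δ₁ Δ₂ : Set V, Δ = Δ₁ ∪ Δ₂ → (∀ a ∈ Δ₁, ∀ b ∈ Δ₂, ⟪a, b⟫ = 0) →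
    Δ₁ = ∅ ∨ Δ₂ = ∅
  grade_add : ∀ γ₁ ∈ Δ, ∀ γ₂ ∈ Δ, γ₁ + γ₂ ∈ Δ → d (γ₁ + γ₂) = d γ₁ + d γ₂
  grade_neg : ∀ γ ∈ Δ, d (-γ) = - d γ
  pos_subset : Pos ⊆ Δ
  pos_iff : ∀ γ ∈ Δ, (γ ∈ Pos ↔ -γ ∉ Pos)
  pos_add : ∀ γ₁ ∈ Pos, ∀ γ₂ ∈ Pos, γ₁ + γ₂ ∈ Δ → γ₁ + γ₂ ∈ Pos
  compatible : ∀ γ ∈ Δ, 1 ≤ d γ → γ ∈ Pos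

/-- The level set `Δ(i)` of the grading. -/
def level (Δ : Set V) (d : V → ℤ) (i : ℤ) : Set V := {γ ∈ Δ | d γ = i}

/-- `Δ(≥ k)`. -/
def levelGE (Δ : Set V) (d : V → ℤ) (k : ℤ) : Set V := {γ ∈ Δ | k ≤ d γ}

/-- `Δ(≤ k)`. -/
def levelLE (Δ : Set V) (d : V → ℤ) (k : ℤ) : Set V := {γ ∈ Δ | d γ ≤ k}

/-- `Δ(0)⁺`, the positive part of `Δ(0)`. -/
def pos0 (d : V → ℤ) (Pos : Set V) : Set V := {γ ∈ Pos | d γ = 0}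

/-- The simple roots of a positive system `P`: positive roots that are not the sum
of two positive roots. -/
def simpleRoots (P : Set V) : Set V := {γ ∈ P | ¬ ∃ a ∈ P, ∃ b ∈ P, γ = a + b}

/-- `idealPow Δ I k = I^k`, with `I¹ = I` and `I^{k+1} = (I + I^k) ∩ Δ`
(and `I⁰ = ∅` by convention). -/
def idealPow (Δ I : Set V) : ℕ → Set V
  | 0 => ∅
  | 1 => I
  | (k+2) => {x ∈ Δ | ∃ a ∈ I, ∃ b ∈ idealPow Δ I (k+1), x = a + b}

/-- `⟨I⟩ = ⋃_{k ≥ 1} I^k`. -/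
def gen (Δ I : Set V) : Set V := ⋃ k : ℕ, idealPow Δ I (k+1)

/-- A subset `M` of roots is closed if it is closed under root addition. -/
def IsClosedSubset (Δ M : Set V) : Prop :=
  ∀ γ₁ ∈ M, ∀ γ₂ ∈ M, γ₁ + γ₂ ∈ Δ → γ₁ + γ₂ ∈ M

/-- Bi-convexity of `M ⊆ Δ⁺`: both `M` and `Δ⁺ \ M` are closed. -/
def IsBiConvex (Δ Pos M : Set V) : Prop :=
  IsClosedSubset Δ M ∧ IsClosedSubset Δ (Pos \ M)

/-- The partial order on each level `Δ(i)`: `γ' ≼ γ` iff `γ - γ'` is a nonnegative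
integral combination of the simple roots `Π(0)` of `Δ(0)⁺`. -/
def leLevel (d : V → ℤ) (Pos : Set V) (γ' γ : V) : Prop :=
  γ - γ' ∈ AddSubmonoid.closure (simpleRoots (pos0 d Pos))

/-- A lower ideal of the weight poset `Δ(i)`. -/
def IsLowerIdeal (Δ : Set V) (d : V → ℤ) (Pos : Set V) (i : ℤ) (I : Set V) : Prop :=
  I ⊆ level Δ d i ∧ ∀ γ ∈ I, ∀ ν ∈ level Δ d i, leLevel d Pos ν γ → ν ∈ I

/-- An upper ideal of the weight poset `Δ(i)`. -/
def IsUpperIdeal (Δ : Set V) (d : V → ℤ) (Pos : Set V) (i : ℤ) (I : Set V) : Prop :=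
  I ⊆ level Δ d i ∧ ∀ γ ∈ I, ∀ ν ∈ level Δ d i, leLevel d Pos γ ν → ν ∈ I

/-- The Weyl group of the set of roots `S`: the subgroup of `GL(V)` generated by the
reflections `s_α`, `α ∈ S`. -/
noncomputable def weyl (S : Set V) : Subgroup (V ≃ₗ[ℝ] V) :=
  Subgroup.closure {g | ∃ α ∈ S, g = sref α}

/-- The inversion set `N(w) = {γ ∈ Δ⁺ | -w(γ) ∈ Δ⁺}`. -/
def invSet (Pos : Set V) (w : V ≃ₗ[ℝ] V) : Set V := {γ ∈ Pos | -(w γ) ∈ Pos}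

/-- `W⁰`, the minimal length coset representatives of `W/W(0)`:
elements of `W` sending `Δ(0)⁺` into `Δ⁺`. -/
noncomputable def W0 (Δ : Set V) (d : V → ℤ) (Pos : Set V) : Set (V ≃ₗ[ℝ] V) :=
  {w | w ∈ weyl Δ ∧ ∀ γ ∈ pos0 d Pos, w γ ∈ Pos}

set_option linter.unusedSectionVars false
set_option maxHeartbeats 1000000

section Aux

variable {Δ Pos : Set V} {d : V → ℤ}

lemma list_sum_nonpos' {L : List ℝ} (hL : ∀ x ∈ L, x ≤ 0) : L.sum ≤ 0 := by
  induction L with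
  | nil => simp
  | cons a T ih =>
    have := hL a List.mem_cons_self
    have := ih (fun x hx => hL x (List.mem_cons_of_mem a hx))
    simp only [List.sum_cons]; linarith

lemma inner_list_sum' (z : V) (L : List V) :
    ⟪z, L.sum⟫ = (L.map (fun a => ⟪z, a⟫)).sum := by
  induction L with
  | nil => simp
  | cons a T ih => simp [inner_add_right, ih]

lemma inner_self_pos' {x : V} (hx : x ≠ 0) : 0 < ⟪x, x⟫ :=
  lt_of_le_of_ne real_inner_self_nonneg (fun e => hx (inner_self_eq_zero.mp e.symm))

lemma exists_inner_pos {z : V} {L : List V} (hs : 0 < ⟪z, L.sum⟫) :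
    ∃ a ∈ L, 0 < ⟪z, a⟫ := by
  by_contra hc
  push_neg at hc
  have : ⟪z, L.sum⟫ ≤ 0 := by
    rw [inner_list_sum']
    exact list_sum_nonpos' (by simpa using hc)
  linarith

lemma exists_inner_neg {z : V} {L : List V} (hs : ⟪z, L.sum⟫ < 0) :
    ∃ a ∈ L, ⟪z, a⟫ < 0 := by
  by_contra hc
  push_neg at hc
  have : 0 ≤ ⟪z, L.sum⟫ := by
    rw [inner_list_sum']
    exact List.sum_nonneg (by simpa using hc)
  linarith

/-- If `a, b` are roots with `⟪a,b⟫ > 0` and `a ≠ b`, then `a - b` is a root. -/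
lemma GradedRootSystem.sub_mem (h : GradedRootSystem Δ d Pos) {a b : V}
    (ha : a ∈ Δ) (hb : b ∈ Δ) (hip : 0 < ⟪a, b⟫) (hne : a ≠ b) : a - b ∈ Δ := by
  have ha0 := h.nonzero a ha
  have hb0 := h.nonzero b hb
  have haa : (0:ℝ) < ⟪a, a⟫ := inner_self_pos' ha0
  have hbb : (0:ℝ) < ⟪b, b⟫ := inner_self_pos' hb0
  obtain ⟨m, hm⟩ := h.crystallographic b hb a ha
  obtain ⟨n, hn⟩ := h.crystallographic a ha b hb
  have hcomm : ⟪b, a⟫ = ⟪a, b⟫ := real_inner_comm a b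
  have hm1 : (0:ℝ) < (m:ℝ) := by rw [hm]; positivity
  have hn1 : (0:ℝ) < (n:ℝ) := by rw [hn, hcomm]; positivity
  have hmz : 1 ≤ m := by exact_mod_cast Int.cast_pos.mp hm1
  have hnz : 1 ≤ n := by exact_mod_cast Int.cast_pos.mp hn1
  -- not parallel: m * n < 4
  have hmn : m * n ≤ 3 := by
    by_contra hc
    push_neg at hc
    have h4 : (4:ℝ) ≤ (m:ℝ) * (n:ℝ) := by exact_mod_cast hc
    have hP2 : ⟪a, a⟫ * ⟪b, b⟫ ≤ ⟪a, b⟫ * ⟪a, b⟫ := by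
      have : (m:ℝ) * (n:ℝ) = 4 * (⟪a, b⟫ * ⟪a, b⟫) / (⟪a, a⟫ * ⟪b, b⟫) := by
        rw [hm, hn, hcomm]; field_simp; ring
      rw [this, le_div_iff₀ (by positivity)] at h4
      linarith
    set c : ℝ := ⟪a, b⟫ / ⟪a, a⟫ with hc_def
    have hw : ⟪b - c • a, b - c • a⟫ = ⟪b, b⟫ - ⟪a, b⟫ * ⟪a, b⟫ / ⟪a, a⟫ := by
      simp only [inner_sub_left, inner_sub_right, real_inner_smul_left,
        real_inner_smul_right, hc_def, hcomm]
      field_simp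
      try ring
    have hw0 : b - c • a = 0 := by
      rw [← inner_self_eq_zero (𝕜 := ℝ)]
      have h1 : ⟪b - c • a, b - c • a⟫ ≤ 0 := by
        rw [hw, sub_nonpos, le_div_iff₀ haa]
        nlinarith
      linarith [real_inner_self_nonneg (x := b - c • a)]
    have hbca : b = c • a := by rw [sub_eq_zero] at hw0; exact hw0
    rcases h.reduced a ha c (hbca ▸ hb) with h1 | h1
    · exact hne (by rw [hbca, h1, one_smul])
    · rw [hbca, h1] at hip
      simp only [neg_smul, one_smul, inner_neg_right] at hip
      linarith
  have hcase : m = 1 ∨ n = 1 := by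
    by_contra hc
    push_neg at hc
    have : 2 ≤ m := by omega
    have : 2 ≤ n := by omega
    nlinarith
  rcases hcase with h1 | h1
  · have := h.reflect_mem b hb a ha
    rwa [← hm, h1, Int.cast_one, one_smul] at this
  · have h2 := h.reflect_mem a ha b hb
    rw [← hn, h1, Int.cast_one, one_smul] at h2
    have := h.neg_mem _ h2
    rwa [neg_sub] at this

/-- If `a, b` are roots with `⟪a,b⟫ < 0` and `a + b ≠ 0`, then `a + b` is a root. -/
lemma GradedRootSystem.add_mem (h : GradedRootSystem Δ d Pos) {a b : V}
    (ha : a ∈ Δ) (hb : b ∈ Δ) (hip : ⟪a, b⟫ < 0) (hne : a + b ≠ 0) : a + b ∈ Δ := by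
  have := h.sub_mem ha (h.neg_mem b hb)
    (by rw [inner_neg_right]; linarith) (by intro e; apply hne; rw [e]; abel)
  rwa [sub_neg_eq_add] at this

end Aux
section Aux2
set_option linter.unusedSectionVars false
set_option maxHeartbeats 1000000
variable {Δ Pos : Set V} {d : V → ℤ}

/-- No nonempty list of positive roots sums to zero. -/
lemma GradedRootSystem.pos_list_sum_ne_zero (h : GradedRootSystem Δ d Pos) :
    ∀ n (L : List V), L.length ≤ n → (∀ a ∈ L, a ∈ Pos) → L ≠ [] → L.sum ≠ 0 := by
  intro n
  induction n with
  | zero =>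
    intro L hl _ hne
    rw [Nat.le_zero, List.length_eq_zero_iff] at hl
    exact absurd hl hne
  | succ n ih =>
    intro L hlen hmem hne hsum
    classical
    match L, hne with
    | a :: T, _ =>
      have haP : a ∈ Pos := hmem a List.mem_cons_self
      have haΔ : a ∈ Δ := h.pos_subset haP
      rcases eq_or_ne T [] with hT | hTne
      · subst hT
        simp only [List.sum_cons, List.sum_nil, add_zero] at hsum
        exact h.nonzero a haΔ hsum
      have hTs : T.sum = -a := by
        have h0 : a + T.sum = 0 := by simpa using hsum
        exact eq_neg_of_add_eq_zero_right h0
      have hin : ⟪a, T.sum⟫ < 0 := by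
        rw [hTs, inner_neg_right]
        have := inner_self_pos' (h.nonzero a haΔ)
        linarith
      obtain ⟨b, hbT, hab⟩ := exists_inner_neg hin
      have hbP : b ∈ Pos := hmem b (List.mem_cons_of_mem a hbT)
      have hbΔ : b ∈ Δ := h.pos_subset hbP
      have habne : a + b ≠ 0 := by
        intro h0
        have hba : b = -a := by
          have := eq_neg_of_add_eq_zero_right h0
          rw [← this]
        rw [hba] at hbP
        exact ((h.pos_iff a haΔ).mp haP) hbP
      have habΔ : a + b ∈ Δ := h.add_mem haΔ hbΔ hab habne
      have habP : a + b ∈ Pos := h.pos_add a haP b hbP habΔ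
      have hperm : T.Perm (b :: T.erase b) := List.perm_cons_erase hbT
      set L' : List V := (a + b) :: T.erase b with hL'
      have hlen' : L'.length ≤ n := by
        have h1 : (T.erase b).length = T.length - 1 := List.length_erase_of_mem hbT
        have h2 : 1 ≤ T.length := List.length_pos_iff.mpr hTne
        have h3 : T.length + 1 ≤ n + 1 := by simpa using hlen
        simp only [hL', List.length_cons, h1]
        omega
      have hmem' : ∀ x ∈ L', x ∈ Pos := by
        intro x hx
        rcases List.mem_cons.mp hx with rfl | hx
        · exact habP
        · exact hmem x (List.mem_cons_of_mem a (List.mem_of_mem_erase hx))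
      have hsum' : L'.sum = 0 := by
        have hTsum : T.sum = b + (T.erase b).sum := by
          simpa using hperm.sum_eq
        have : L'.sum = a + T.sum := by
          rw [hL', List.sum_cons, hTsum]; abel
        rw [this, hTs]; abel
      exact ih L' hlen' hmem' (by simp [hL']) hsum'

/-- Every element of `Δ(0)⁺` is a sum of simple roots of `Δ(0)⁺`. -/
lemma GradedRootSystem.pos0_mem_closure (h : GradedRootSystem Δ d Pos) :
    ∀ δ ∈ pos0 d Pos, δ ∈ AddSubmonoid.closure (simpleRoots (pos0 d Pos)) := by
  classical
  set S : Set V := pos0 d Pos with hS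
  have hSP : S ⊆ Pos := fun x hx => hx.1
  have hfin : S.Finite := h.finite.subset (fun x hx => h.pos_subset (hSP hx))
  haveI : Finite ↥S := hfin.to_subtype
  set r : ↥S → ↥S → Prop := fun a γ => ∃ b ∈ S, (γ : V) = (a : V) + b with hr
  have hchain : ∀ x y : ↥S, Relation.TransGen r x y →
      ∃ L : List V, L ≠ [] ∧ (∀ b ∈ L, b ∈ S) ∧ (y : V) = (x : V) + L.sum := by
    intro x y hxy
    induction hxy with
    | single hrel =>
      obtain ⟨b, hb, he⟩ := hrel
      exact ⟨[b], by simp, by simpa using hb, by simpa using he⟩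
    | tail _ hrel ih =>
      obtain ⟨b, hb, he⟩ := hrel
      obtain ⟨L, hLne, hLmem, hLsum⟩ := ih
      refine ⟨L ++ [b], by simp, ?_, ?_⟩
      · intro c hc
        rcases List.mem_append.mp hc with hc | hc
        · exact hLmem c hc
        · simp at hc; subst hc; exact hb
      · rw [he, hLsum]
        simp [add_assoc]
  haveI : IsTrans ↥S (Relation.TransGen r) := ⟨fun _ _ _ => Relation.TransGen.trans⟩
  haveI : IsIrrefl ↥S (Relation.TransGen r) := by
    constructor
    intro x hx
    obtain ⟨L, hLne, hLmem, hLsum⟩ := hchain x x hx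
    have : L.sum = 0 := by
      have h0 : (x : V) + L.sum = (x : V) + 0 := by rw [add_zero, ← hLsum]
      exact add_left_cancel h0
    exact h.pos_list_sum_ne_zero L.length L le_rfl (fun a ha => hSP (hLmem a ha)) hLne this
  have hwf : WellFounded (Relation.TransGen r) :=
    Finite.wellFounded_of_trans_of_irrefl _
  intro δ hδ
  suffices hmain : ∀ x : ↥S, (x : V) ∈ AddSubmonoid.closure (simpleRoots S) from hmain ⟨δ, hδ⟩
  intro x
  refine hwf.induction (C := fun y => (y : V) ∈ AddSubmonoid.closure (simpleRoots S)) x ?_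
  intro x ihx
  by_cases hs : ∃ a ∈ S, ∃ b ∈ S, (x : V) = a + b
  · obtain ⟨a, haS, b, hbS, he⟩ := hs
    have h1 : Relation.TransGen r ⟨a, haS⟩ x := Relation.TransGen.single ⟨b, hbS, he⟩
    have h2 : Relation.TransGen r ⟨b, hbS⟩ x :=
      Relation.TransGen.single ⟨a, haS, by rw [he]; abel⟩
    have := AddSubmonoid.add_mem _ (ihx _ h1) (ihx _ h2)
    rwa [← he] at this
  · exact AddSubmonoid.subset_closure ⟨x.2, hs⟩

end Aux2
section Aux3
set_option linter.unusedSectionVars false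
set_option maxHeartbeats 1000000
variable {Δ Pos : Set V} {d : V → ℤ} {J : Set V}

lemma GradedRootSystem.J_sub_pos (h : GradedRootSystem Δ d Pos)
    (hJ1 : J ⊆ level Δ d 1) : J ⊆ Pos := fun a ha =>
  h.compatible a (hJ1 ha).1 (by rw [(hJ1 ha).2])

/-- Membership in `J^{k+1}` forces grade `k+1`. -/
lemma GradedRootSystem.ip_spec (h : GradedRootSystem Δ d Pos)
    (hJ1 : J ⊆ level Δ d 1) :
    ∀ k, ∀ x ∈ idealPow Δ J (k+1), x ∈ Δ ∧ d x = (k : ℤ) + 1 := by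
  intro k
  induction k with
  | zero =>
    intro x hx
    exact ⟨(hJ1 hx).1, by rw [(hJ1 hx).2]; ring⟩
  | succ k ih =>
    rintro x ⟨hxΔ, a, haJ, b, hb, rfl⟩
    obtain ⟨hbΔ, hdb⟩ := ih b hb
    have haΔ : a ∈ Δ := (hJ1 haJ).1
    have hda : d a = 1 := (hJ1 haJ).2
    have hg := h.grade_add a haΔ b hbΔ hxΔ
    refine ⟨hxΔ, ?_⟩
    rw [hg, hda, hdb]; push_cast; ring

lemma ip_decomp :
    ∀ k, ∀ x ∈ idealPow Δ J (k+1),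
      ∃ L : List V, (∀ a ∈ L, a ∈ J) ∧ L.length = k+1 ∧ L.sum = x := by
  intro k
  induction k with
  | zero =>
    intro x hx
    exact ⟨[x], by simp; exact hx, by simp, by simp⟩
  | succ k ih =>
    rintro x ⟨hxΔ, a, haJ, b, hb, rfl⟩
    obtain ⟨L, hLmem, hLlen, hLsum⟩ := ih b hb
    refine ⟨a :: L, ?_, by simp [hLlen], by simp [hLsum]⟩
    intro c hc
    rcases List.mem_cons.mp hc with rfl | hc
    · exact haJ
    · exact hLmem c hc

/-- Resummation: a root that is the sum of a list of elements of `J ⊆ Δ(1)` lies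
in the corresponding power of `J`. -/
lemma GradedRootSystem.resum (h : GradedRootSystem Δ d Pos)
    (hJ1 : J ⊆ level Δ d 1) :
    ∀ n (L : List V), L.length = n + 1 → (∀ a ∈ L, a ∈ J) →
      ∀ z ∈ Δ, z = L.sum → z ∈ idealPow Δ J (n+1) := by
  classical
  intro n
  induction n using Nat.strong_induction_on with
  | _ n ih =>
    intro L hlen hmem z hzΔ hzs
    cases n with
    | zero =>
      obtain ⟨a, rfl⟩ := List.length_eq_one_iff.mp hlen
      have : z = a := by simpa using hzs
      rw [this]
      exact hmem a (by simp)
    | succ m =>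
      have hz0 : 0 < ⟪z, L.sum⟫ := by
        rw [← hzs]; exact inner_self_pos' (h.nonzero z hzΔ)
      obtain ⟨a, haL, hza⟩ := exists_inner_pos hz0
      have haJ : a ∈ J := hmem a haL
      have haΔ : a ∈ Δ := (hJ1 haJ).1
      have hperm : L.Perm (a :: L.erase a) := List.perm_cons_erase haL
      have hLsum : L.sum = a + (L.erase a).sum := by simpa using hperm.sum_eq
      have hlen2 : (L.erase a).length = m + 1 := by
        rw [List.length_erase_of_mem haL, hlen]; omega
      by_cases hzea : z = a
      · exfalso
        have hs0 : (L.erase a).sum = 0 := by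
          have : a + (L.erase a).sum = a + 0 := by
            rw [add_zero, ← hLsum, ← hzs, hzea]
          exact add_left_cancel this
        have hne : L.erase a ≠ [] := by
          intro he; rw [he] at hlen2; simp at hlen2
        exact h.pos_list_sum_ne_zero (L.erase a).length (L.erase a) le_rfl
          (fun b hb => h.J_sub_pos hJ1 (hmem b (List.mem_of_mem_erase hb))) hne hs0
      · have hsub : z - a ∈ Δ := h.sub_mem hzΔ haΔ hza hzea
        have hes : z - a = (L.erase a).sum := by
          rw [hzs, hLsum]; abel
        have ih' := ih m (by omega) (L.erase a) hlen2
          (fun b hb => hmem b (List.mem_of_mem_erase hb)) (z - a) hsub hes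
        exact ⟨hzΔ, a, haJ, z - a, ih', by abel⟩

lemma mem_gen_iff {x : V} : x ∈ gen Δ J ↔ ∃ k, x ∈ idealPow Δ J (k+1) := by
  simp [gen]

lemma J_sub_gen : J ⊆ gen Δ J := fun a ha => mem_gen_iff.mpr ⟨0, ha⟩

lemma GradedRootSystem.gen_spec (h : GradedRootSystem Δ d Pos)
    (hJ1 : J ⊆ level Δ d 1) {x : V} (hx : x ∈ gen Δ J) : x ∈ Δ ∧ 1 ≤ d x := by
  obtain ⟨k, hk⟩ := mem_gen_iff.mp hx
  obtain ⟨h1, h2⟩ := h.ip_spec hJ1 k x hk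
  exact ⟨h1, by omega⟩

/-- `⟨J⟩` is closed under root addition. -/
lemma GradedRootSystem.gen_closed (h : GradedRootSystem Δ d Pos)
    (hJ1 : J ⊆ level Δ d 1) {x y : V} (hx : x ∈ gen Δ J) (hy : y ∈ gen Δ J)
    (hxy : x + y ∈ Δ) : x + y ∈ gen Δ J := by
  obtain ⟨kx, hkx⟩ := mem_gen_iff.mp hx
  obtain ⟨ky, hky⟩ := mem_gen_iff.mp hy
  obtain ⟨Lx, hxm, hxl, hxs⟩ := ip_decomp kx x hkx
  obtain ⟨Ly, hym, hyl, hys⟩ := ip_decomp ky y hky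
  refine mem_gen_iff.mpr ⟨kx + ky + 1, ?_⟩
  refine h.resum hJ1 (kx + ky + 1) (Lx ++ Ly) ?_ ?_ (x + y) hxy ?_
  · simp [hxl, hyl]; ring
  · intro a ha
    rcases List.mem_append.mp ha with ha | ha
    · exact hxm a ha
    · exact hym a ha
  · rw [List.sum_append, hxs, hys]

end Aux3
section Aux4
set_option linter.unusedSectionVars false
set_option linter.unusedVariables false
set_option maxHeartbeats 1000000
variable {Δ Pos : Set V} {d : V → ℤ} {J : Set V}

/-- Adding a positive level-0 root to an element of the upper ideal `J` stays in `J`. -/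
lemma GradedRootSystem.absorb (h : GradedRootSystem Δ d Pos)
    (hJ1 : J ⊆ level Δ d 1)
    (hup : ∀ a ∈ J, ∀ ν ∈ level Δ d 1, leLevel d Pos a ν → ν ∈ J)
    {a δ : V} (haJ : a ∈ J) (hδ : δ ∈ pos0 d Pos) (haδ : a + δ ∈ Δ) : a + δ ∈ J := by
  have haΔ : a ∈ Δ := (hJ1 haJ).1
  have hδΔ : δ ∈ Δ := h.pos_subset hδ.1
  have hd : d (a + δ) = 1 := by
    rw [h.grade_add a haΔ δ hδΔ haδ, (hJ1 haJ).2, hδ.2]; ring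
  refine hup a haJ (a + δ) ⟨haδ, hd⟩ ?_
  show a + δ - a ∈ AddSubmonoid.closure (simpleRoots (pos0 d Pos))
  have : a + δ - a = δ := by abel
  rw [this]
  exact h.pos0_mem_closure δ hδ

/-- Adding a positive level-0 root to a sum of elements of `J`. -/
lemma GradedRootSystem.genUpList (h : GradedRootSystem Δ d Pos)
    (hJ1 : J ⊆ level Δ d 1)
    (hup : ∀ a ∈ J, ∀ ν ∈ level Δ d 1, leLevel d Pos a ν → ν ∈ J) :
    ∀ n (L : List V), L.length = n + 1 → (∀ a ∈ L, a ∈ J) →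
      ∀ δ ∈ pos0 d Pos, ∀ s ∈ Δ, s = δ + L.sum → s ∈ idealPow Δ J (n+1) := by
  classical
  intro n
  induction n using Nat.strong_induction_on with
  | _ n ih =>
    intro L hlen hmem δ hδ s hsΔ hss
    have hδΔ : δ ∈ Δ := h.pos_subset hδ.1
    cases n with
    | zero =>
      obtain ⟨a, rfl⟩ := List.length_eq_one_iff.mp hlen
      have haJ : a ∈ J := hmem a (by simp)
      have hsa : s = a + δ := by rw [hss]; simp; abel
      rw [hsa]
      exact h.absorb hJ1 hup haJ hδ (hsa ▸ hsΔ)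
    | succ m =>
      by_cases hex : ∃ a ∈ L, ⟪δ, a⟫ < 0
      · obtain ⟨a, haL, hδa⟩ := hex
        have haJ : a ∈ J := hmem a haL
        have haΔ : a ∈ Δ := (hJ1 haJ).1
        have hane : a + δ ≠ 0 := by
          intro h0
          have : a = -δ := eq_neg_of_add_eq_zero_left h0
          have h1 : d a = 1 := (hJ1 haJ).2
          rw [this, h.grade_neg δ hδΔ, hδ.2] at h1
          simp at h1
        have haδΔ : a + δ ∈ Δ := h.add_mem haΔ hδΔ (by rw [real_inner_comm]; exact hδa) hane
        have haδJ : a + δ ∈ J := h.absorb hJ1 hup haJ hδ haδΔ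
        have hperm : L.Perm (a :: L.erase a) := List.perm_cons_erase haL
        have hLsum : L.sum = a + (L.erase a).sum := by simpa using hperm.sum_eq
        refine h.resum hJ1 (m+1) ((a + δ) :: L.erase a) ?_ ?_ s hsΔ ?_
        · simp [List.length_erase_of_mem haL, hlen]
        · intro c hc
          rcases List.mem_cons.mp hc with rfl | hc
          · exact haδJ
          · exact hmem c (List.mem_of_mem_erase hc)
        · rw [hss, hLsum, List.sum_cons]; abel
      · push_neg at hex
        have hLne : L ≠ [] := by intro he; rw [he] at hlen; simp at hlen
        have htne : L.sum ≠ 0 :=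
          h.pos_list_sum_ne_zero L.length L le_rfl
            (fun b hb => h.J_sub_pos hJ1 (hmem b hb)) hLne
        have h1 : 0 ≤ ⟪δ, L.sum⟫ := by
          rw [inner_list_sum']
          exact List.sum_nonneg (by simpa using hex)
        have h2 : 0 < ⟪L.sum, L.sum⟫ := inner_self_pos' htne
        have h3 : 0 < ⟪s, L.sum⟫ := by
          rw [hss, inner_add_left]; linarith
        obtain ⟨a, haL, hsa⟩ := exists_inner_pos h3
        have haJ : a ∈ J := hmem a haL
        have haΔ : a ∈ Δ := (hJ1 haJ).1
        have hperm : L.Perm (a :: L.erase a) := List.perm_cons_erase haL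
        have hLsum : L.sum = a + (L.erase a).sum := by simpa using hperm.sum_eq
        have hsne : s ≠ a := by
          intro he
          have hs0 : (δ :: L.erase a).sum = 0 := by
            have : a + (δ + (L.erase a).sum) = a + 0 := by
              rw [add_zero]
              calc a + (δ + (L.erase a).sum) = δ + L.sum := by rw [hLsum]; abel
                _ = s := hss.symm
                _ = a := he
            have := add_left_cancel this
            simpa using this
          refine h.pos_list_sum_ne_zero _ (δ :: L.erase a) le_rfl ?_ (by simp) hs0
          intro b hb
          rcases List.mem_cons.mp hb with rfl | hb
          · exact hδ.1
          · exact h.J_sub_pos hJ1 (hmem b (List.mem_of_mem_erase hb))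
        have hsub : s - a ∈ Δ := h.sub_mem hsΔ haΔ hsa hsne
        have heq : s - a = δ + (L.erase a).sum := by
          rw [hss, hLsum]; abel
        have hlen2 : (L.erase a).length = m + 1 := by
          rw [List.length_erase_of_mem haL, hlen]; omega
        have ih' := ih m (by omega) (L.erase a) hlen2
          (fun b hb => hmem b (List.mem_of_mem_erase hb)) δ hδ (s - a) hsub heq
        exact ⟨hsΔ, a, haJ, s - a, ih', by abel⟩

lemma GradedRootSystem.genUp (h : GradedRootSystem Δ d Pos)
    (hJ1 : J ⊆ level Δ d 1)
    (hup : ∀ a ∈ J, ∀ ν ∈ level Δ d 1, leLevel d Pos a ν → ν ∈ J)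
    {t δ : V} (ht : t ∈ gen Δ J) (hδ : δ ∈ pos0 d Pos) (htδ : t + δ ∈ Δ) :
    t + δ ∈ gen Δ J := by
  obtain ⟨k, hk⟩ := mem_gen_iff.mp ht
  obtain ⟨L, hLmem, hLlen, hLsum⟩ := ip_decomp k t hk
  refine mem_gen_iff.mpr ⟨k, ?_⟩
  exact h.genUpList hJ1 hup k L hLlen hLmem δ hδ (t + δ) htδ (by rw [← hLsum]; abel)

end Aux4
section Aux5
set_option linter.unusedSectionVars false
set_option linter.unusedVariables false
set_option maxHeartbeats 1000000
variable {Δ Pos : Set V} {d : V → ℤ} {J : Set V}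

/-- If a sum of two roots of positive level lies in `⟨J⟩`, one of them does. -/
lemma GradedRootSystem.key (h : GradedRootSystem Δ d Pos)
    (hJ1 : J ⊆ level Δ d 1)
    (hup : ∀ a ∈ J, ∀ ν ∈ level Δ d 1, leLevel d Pos a ν → ν ∈ J) :
    ∀ k, ∀ s ∈ idealPow Δ J (k+1), ∀ x ∈ Δ, ∀ y ∈ Δ, s = x + y →
      1 ≤ d x → 1 ≤ d y → x ∈ gen Δ J ∨ y ∈ gen Δ J := by
  intro k
  induction k using Nat.strong_induction_on with
  | _ k ih =>
    intro s hs x hx y hy hsxy hdx hdy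
    have hsΔ : s ∈ Δ := (h.ip_spec hJ1 k s hs).1
    have hds : d s = (k : ℤ) + 1 := (h.ip_spec hJ1 k s hs).2
    have hdxy : d s = d x + d y := by rw [hsxy]; exact h.grade_add x hx y hy (hsxy ▸ hsΔ)
    cases k with
    | zero => exfalso; omega
    | succ m =>
      obtain ⟨-, a, haJ, t, htI, hst⟩ := hs
      have haΔ : a ∈ Δ := (hJ1 haJ).1
      have hda : d a = 1 := (hJ1 haJ).2
      obtain ⟨htΔ, hdt⟩ := h.ip_spec hJ1 m t htI
      have htgen : t ∈ gen Δ J := mem_gen_iff.mpr ⟨m, htI⟩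
      have h0 : a + t = x + y := by rw [← hst, ← hsxy]
      by_cases hxa : x = a
      · exact Or.inl (J_sub_gen (hxa ▸ haJ))
      by_cases hya : y = a
      · exact Or.inr (J_sub_gen (hya ▸ haJ))
      have htxy : t = (x - a) + y := by
        calc t = (a + t) - a := by abel
          _ = (x + y) - a := by rw [h0]
          _ = (x - a) + y := by abel
      have htyx : t = (y - a) + x := by rw [htxy]; abel
      by_cases hu : x - a ∈ Δ
      · -- absorb into x
        have hgx : d x = d a + d (x - a) := by
          have he : a + (x - a) = x := by abel
          have := h.grade_add a haΔ (x - a) hu (by rw [he]; exact hx)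
          rwa [he] at this
        by_cases hdx1 : d x = 1
        · by_cases huP : x - a ∈ Pos
          · refine Or.inl (J_sub_gen (hup a haJ x ⟨hx, hdx1⟩ ?_))
            exact h.pos0_mem_closure (x - a) ⟨huP, by omega⟩
          · have hnegP : -(x - a) ∈ Pos := by
              by_contra hc
              exact huP ((h.pos_iff _ hu).mpr hc)
            have hneg0 : d (-(x - a)) = 0 := by rw [h.grade_neg _ hu]; omega
            have hyt : y = t + (-(x - a)) := by rw [htxy]; abel
            refine Or.inr ?_
            have := h.genUp hJ1 hup htgen ⟨hnegP, hneg0⟩ (by rw [← hyt]; exact hy)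
            rwa [← hyt] at this
        · have h1 : 1 ≤ d (x - a) := by omega
          rcases ih m (by omega) t htI (x - a) hu y hy htxy h1 hdy with h2 | h2
          · refine Or.inl ?_
            have hx' : (x - a) + a ∈ Δ := by rw [show (x - a) + a = x by abel]; exact hx
            have := h.gen_closed hJ1 h2 (J_sub_gen haJ) hx'
            rwa [show (x - a) + a = x by abel] at this
          · exact Or.inr h2
      by_cases hv : y - a ∈ Δ
      · -- absorb into y (mirror)
        have hgy : d y = d a + d (y - a) := by
          have he : a + (y - a) = y := by abel
          have := h.grade_add a haΔ (y - a) hv (by rw [he]; exact hy)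
          rwa [he] at this
        by_cases hdy1 : d y = 1
        · by_cases hvP : y - a ∈ Pos
          · refine Or.inr (J_sub_gen (hup a haJ y ⟨hy, hdy1⟩ ?_))
            exact h.pos0_mem_closure (y - a) ⟨hvP, by omega⟩
          · have hnegP : -(y - a) ∈ Pos := by
              by_contra hc
              exact hvP ((h.pos_iff _ hv).mpr hc)
            have hneg0 : d (-(y - a)) = 0 := by rw [h.grade_neg _ hv]; omega
            have hxt : x = t + (-(y - a)) := by rw [htyx]; abel
            refine Or.inl ?_
            have := h.genUp hJ1 hup htgen ⟨hnegP, hneg0⟩ (by rw [← hxt]; exact hx)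
            rwa [← hxt] at this
        · have h1 : 1 ≤ d (y - a) := by omega
          rcases ih m (by omega) t htI (y - a) hv x hx htyx h1 hdx with h2 | h2
          · refine Or.inr ?_
            have hy' : (y - a) + a ∈ Δ := by rw [show (y - a) + a = y by abel]; exact hy
            have := h.gen_closed hJ1 h2 (J_sub_gen haJ) hy'
            rwa [show (y - a) + a = y by abel] at this
          · exact Or.inl h2
      -- impossible case: all inner products nonpositive
      exfalso
      have hxa' : ⟪x, a⟫ ≤ 0 := by
        by_contra hc; push_neg at hc
        exact hu (h.sub_mem hx haΔ hc hxa)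
      have hya' : ⟪y, a⟫ ≤ 0 := by
        by_contra hc; push_neg at hc
        exact hv (h.sub_mem hy haΔ hc hya)
      have htx : ⟪t, x⟫ ≤ 0 := by
        by_contra hc; push_neg at hc
        have htnex : t ≠ x := by
          intro he
          apply hya
          have h0' : a + x = x + y := he ▸ h0
          have h2 : x + a = x + y := by rw [add_comm x a]; exact h0'
          exact (add_left_cancel h2).symm
        have hsub := h.sub_mem htΔ hx hc htnex
        apply hv
        have : y - a = t - x := by
          rw [sub_eq_sub_iff_add_eq_add, add_comm y x, add_comm t a]
          exact h0.symm
        rwa [this]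
      have hty : ⟪t, y⟫ ≤ 0 := by
        by_contra hc; push_neg at hc
        have htney : t ≠ y := by
          intro he
          apply hxa
          have h0' : a + y = x + y := he ▸ h0
          exact (add_right_cancel h0').symm
        have hsub := h.sub_mem htΔ hy hc htney
        apply hu
        have : x - a = t - y := by
          rw [sub_eq_sub_iff_add_eq_add, add_comm t a]
          exact h0.symm
        rwa [this]
      have hss : 0 < ⟪s, s⟫ := inner_self_pos' (h.nonzero s hsΔ)
      have hexp : ⟪s, s⟫ = ⟪x, a⟫ + ⟪x, t⟫ + ⟪y, a⟫ + ⟪y, t⟫ := by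
        have e1 : (⟪s, s⟫ : ℝ) = ⟪x + y, a + t⟫ := by rw [← hsxy, ← hst]
        rw [e1, inner_add_left, inner_add_right, inner_add_right]
        ring
      have c1 : ⟪x, t⟫ = ⟪t, x⟫ := real_inner_comm t x
      have c2 : ⟪y, t⟫ = ⟪t, y⟫ := real_inner_comm t y
      linarith

end Aux5
set_option maxHeartbeats 1000000 in
/-- If `I` is a lower ideal of `Δ(1)` and `Iᶜ = Δ(1) \\ I`, then
`Δ(≥1) \\ ⟨Iᶜ⟩` is a bi-convex subset of `Δ⁺`. -/
theorem stmt5 (Δ : Set V) (d : V → ℤ) (Pos : Set V)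
    (h : GradedRootSystem Δ d Pos) (I : Set V)
    (hI : IsLowerIdeal Δ d Pos 1 I) :
    IsBiConvex Δ Pos (levelGE Δ d 1 \ gen Δ (level Δ d 1 \ I)) := by
  set J : Set V := level Δ d 1 \ I with hJdef
  have hJ1 : J ⊆ level Δ d 1 := Set.diff_subset
  have hup : ∀ a ∈ J, ∀ ν ∈ level Δ d 1, leLevel d Pos a ν → ν ∈ J := by
    intro a haJ ν hν hle
    refine ⟨hν, fun hνI => ?_⟩
    exact haJ.2 (hI.2 ν hνI a (hJ1 haJ) hle)
  constructor
  · -- M is closed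
    rintro x ⟨⟨hxΔ, hdx⟩, hxg⟩ y ⟨⟨hyΔ, hdy⟩, hyg⟩ hsΔ
    have hds : d (x + y) = d x + d y := h.grade_add x hxΔ y hyΔ hsΔ
    refine ⟨⟨hsΔ, by omega⟩, ?_⟩
    intro hg
    obtain ⟨k, hk⟩ := mem_gen_iff.mp hg
    rcases h.key hJ1 hup k (x + y) hk x hxΔ y hyΔ rfl hdx hdy with h1 | h1
    · exact hxg h1
    · exact hyg h1
  · -- Pos \ M is closed
    rintro x ⟨hxP, hxM⟩ y ⟨hyP, hyM⟩ hsΔ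
    refine ⟨h.pos_add x hxP y hyP hsΔ, ?_⟩
    rintro ⟨⟨-, hdge⟩, hng⟩
    have hcase : ∀ z : V, z ∈ Pos → z ∉ levelGE Δ d 1 \ gen Δ J →
        z ∈ pos0 d Pos ∨ z ∈ gen Δ J := by
      intro z hzP hzM
      have hzΔ : z ∈ Δ := h.pos_subset hzP
      by_cases hzg : z ∈ gen Δ J
      · exact Or.inr hzg
      · have hzge : z ∉ levelGE Δ d 1 := fun hc => hzM ⟨hc, hzg⟩
        have hdz : ¬ (1 ≤ d z) := fun hc => hzge ⟨hzΔ, hc⟩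
        have hdz0 : d z = 0 := by
          by_contra hc
          have hd1 : d z ≤ -1 := by omega
          have hnz : -z ∈ Δ := h.neg_mem z hzΔ
          have : 1 ≤ d (-z) := by rw [h.grade_neg z hzΔ]; omega
          have := h.compatible (-z) hnz this
          exact ((h.pos_iff z hzΔ).mp hzP) this
        exact Or.inl ⟨hzP, hdz0⟩
    rcases hcase x hxP hxM with hx0 | hxg
    · rcases hcase y hyP hyM with hy0 | hyg
      · -- both level 0: contradiction with d (x+y) ≥ 1
        have := h.grade_add x (h.pos_subset hxP) y (h.pos_subset hyP) hsΔ
        rw [hx0.2, hy0.2] at this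
        omega
      · -- y ∈ gen, x ∈ pos0 : x + y = y + x ∈ gen
        have := h.genUp hJ1 hup hyg hx0 (by rwa [add_comm y x])
        rw [add_comm y x] at this
        exact hng this
    · rcases hcase y hyP hyM with hy0 | hyg
      · exact hng (h.genUp hJ1 hup hxg hy0 hsΔ)
      · exact hng (h.gen_closed hJ1 hxg hyg hsΔ)
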